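/- A point X lies on the incircle of triangle ABC if and only if X K Xᵀ − 2 I K Xᵀ + (1/2) I K Iᵀ = 0, where I is the incenter and K = diag(S_A, S_B, S_C), in normalized barycentric coordinates. -/

import Mathlib

open scoped RealInnerProductSpace

noncomputable section

abbrev Pt := EuclideanSpace ℝ (Fin 2)

/-- Signed area of triangle XYZ in the plane. -/
def sArea (X Y Z : Pt) : ℝ :=
  ((Y 0 - X 0) * (Z 1 - X 1) - (Z 0 - X 0) * (Y 1 - X 1)) / 2

/-- Conway symbol: `conwayA A B C = S_A = (b^2 + c^2 - a^2)/2`. -/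
def conwayA (X Y Z : Pt) : ℝ :=
  (dist Z X ^ 2 + dist X Y ^ 2 - dist Y Z ^ 2) / 2

/-- The bilinear form given by the metric matrix K = diag (S_A, S_B, S_C). -/
def Kf (A B C : Pt) (u v : Fin 3 → ℝ) : ℝ :=
  conwayA A B C * u 0 * v 0 + conwayA B C A * u 1 * v 1 + conwayA C A B * u 2 * v 2

/-- The point with (normalized) barycentric coordinates `u` w.r.t. A, B, C. -/
def bary (A B C : Pt) (u : Fin 3 → ℝ) : Pt :=
  u 0 • A + u 1 • B + u 2 • C

lemma distsq (P Q : Pt) : dist P Q ^ 2 = (P 0 - Q 0) ^ 2 + (P 1 - Q 1) ^ 2 := by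
  rw [EuclideanSpace.dist_eq, Real.sq_sqrt (by positivity)]
  simp [Fin.sum_univ_two, Real.dist_eq, sq_abs]

lemma bary_apply (A B C : Pt) (u : Fin 3 → ℝ) (i : Fin 2) :
    bary A B C u i = u 0 * A i + u 1 * B i + u 2 * C i := by
  simp [bary]

lemma dist_bary_sq (A B C : Pt) (u v : Fin 3 → ℝ)
    (hu : u 0 + u 1 + u 2 = 1) (hv : v 0 + v 1 + v 2 = 1) :
    dist (bary A B C u) (bary A B C v) ^ 2 =
      Kf A B C u u - 2 * Kf A B C u v + Kf A B C v v := by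
  have h2 : u 2 = 1 - u 0 - u 1 := by linarith
  have h2' : v 2 = 1 - v 0 - v 1 := by linarith
  rw [distsq, bary_apply, bary_apply, bary_apply, bary_apply]
  simp only [Kf, conwayA, distsq, h2, h2']
  ring

theorem stmt16 (A B C : Pt) (h : sArea A B C ≠ 0)
    (a b c S p r : ℝ) (ha : a = dist B C) (hb : b = dist C A) (hc : c = dist A B)
    (hS : S = |sArea A B C|) (hp : p = (a + b + c) / 2) (hr : r = S / p)
    (Ib : Fin 3 → ℝ) (hIb : Ib = ![a / (2 * p), b / (2 * p), c / (2 * p)])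
    (Ipt : Pt) (hIpt : Ipt = bary A B C Ib)
    (X : Fin 3 → ℝ) (Xpt : Pt) (hX1 : X 0 + X 1 + X 2 = 1)
    (hXpt : Xpt = bary A B C X) :
    dist Xpt Ipt = r ↔
      Kf A B C X X - 2 * Kf A B C Ib X + (1 / 2) * Kf A B C Ib Ib = 0 := by
  have hSpos : 0 < S := by
    rw [hS]; exact abs_pos.mpr h
  have hBC : B ≠ C := by
    rintro rfl; apply h; simp [sArea]
  have hapos : 0 < a := by rw [ha]; exact dist_pos.mpr hBC
  have hppos : 0 < p := by
    rw [hp, ha, hb, hc]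
    have := dist_nonneg (x := C) (y := A)
    have := dist_nonneg (x := A) (y := B)
    rw [← ha] at *
    linarith
  have hrpos : 0 < r := by rw [hr]; positivity
  have hIbsum : Ib 0 + Ib 1 + Ib 2 = 1 := by
    rw [hIb]
    simp only [Matrix.cons_val_zero, Matrix.cons_val_one, Matrix.head_cons,
      Matrix.cons_val_two, Matrix.tail_cons]
    field_simp
    linarith [hp]
  have hKsym : Kf A B C Ib X = Kf A B C X Ib := by
    simp [Kf]; ring
  -- Heron: 16 S^2 = 2a²b²+2b²c²+2c²a² - a⁴ - b⁴ - c⁴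
  have heron : 16 * S ^ 2 = 2*a^2*b^2 + 2*b^2*c^2 + 2*c^2*a^2 - a^4 - b^4 - c^4 := by
    have h1 : S ^ 2 = sArea A B C ^ 2 := by rw [hS, sq_abs]
    rw [h1, ha, hb, hc]
    simp only [show ∀ x:ℝ, x^4 = (x^2)^2 from fun x => by ring, distsq, sArea]
    ring
  have hKII : Kf A B C Ib Ib = 2 * r ^ 2 := by
    rw [hIb, hr]
    simp only [Kf, conwayA, Matrix.cons_val_zero, Matrix.cons_val_one, Matrix.head_cons,
      Matrix.cons_val_two, Matrix.tail_cons, ← ha, ← hb, ← hc]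
    have hpne : p ≠ 0 := ne_of_gt hppos
    field_simp
    linear_combination -1 * heron
  have hd : dist Xpt Ipt ^ 2 = Kf A B C X X - 2 * Kf A B C Ib X + Kf A B C Ib Ib := by
    rw [hXpt, hIpt, dist_bary_sq A B C X Ib hX1 hIbsum, hKsym]
  constructor
  · intro he
    have : dist Xpt Ipt ^ 2 = r ^ 2 := by rw [he]
    rw [hd] at this
    linarith [hKII]
  · intro he
    have h2 : dist Xpt Ipt ^ 2 = r ^ 2 := by rw [hd]; linarith [hKII]
    nlinarith [dist_nonneg (x := Xpt) (y := Ipt)]
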